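/- arXiv:2104.06685 — 4 statements merged into one kernel-verified Lean document; each statement's English description precedes it below -/
import Mathlib

section
/- Let {z_ω : ω ∈ 𝒲} be random vectors in ℝ^p and suppose the number of Byzantine workers satisfies B < W/2. Then the (exact) geometric median of {z_ω : ω ∈ 𝒲} satisfies E‖geomed{z_ω}‖² ≤ (C_α²/R) Σ_{ω∈ℛ} E‖z_ω‖². -/
open MeasureTheory Finset

/-- `z` is a geometric median of the vectors `v ω`, i.e. a minimizer of
`y ↦ ∑ ω, ‖y − v ω‖`. -/
def IsGeomMedian {ι : Type*} [Fintype ι] {E : Type*} [NormedAddCommGroup E]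
    (v : ι → E) (z : E) : Prop :=
  ∀ y : E, ∑ ω, ‖z - v ω‖ ≤ ∑ ω, ‖y - v ω‖

/-- **Geometric median bound (exact median).**
In a system of `W` workers with regular set `Reg` (of cardinality `R`) and `B = W − R`
Byzantine workers, let `{z_ω}` be random vectors in `ℝ^p` and suppose `B < W/2`.  Then the
geometric median `m` of `{z_ω : ω ∈ 𝒲}` satisfies
`E‖m‖² ≤ (C_α²/R) ∑_{ω ∈ Reg} E‖z_ω‖²`, where `α = B/W` and `C_α = (2−2α)/(1−2α)`. -/
theorem geomed_second_moment_bound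
    {p : ℕ} {ι : Type*} [Fintype ι] [DecidableEq ι]
    {Ω : Type*} [MeasureSpace Ω] [IsProbabilityMeasure (volume : Measure Ω)]
    (Reg : Finset ι) (hB : 2 * Regᶜ.card < Fintype.card ι)
    (z : ι → Ω → EuclideanSpace ℝ (Fin p))
    (hz_meas : ∀ ω, Measurable (z ω))
    (hz2 : ∀ ω ∈ Reg, MemLp (z ω) 2 volume)
    (m : Ω → EuclideanSpace ℝ (Fin p)) (hm_meas : Measurable m)
    (hm : ∀ a : Ω, IsGeomMedian (fun ω => z ω a) (m a))
    (α Cα : ℝ)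
    (hα : α = (Regᶜ.card : ℝ) / (Fintype.card ι : ℝ))
    (hCα : Cα = (2 - 2 * α) / (1 - 2 * α)) :
    ∫ a, ‖m a‖ ^ 2 ≤ Cα ^ 2 / (Reg.card : ℝ) * ∑ ω ∈ Reg, ∫ a, ‖z ω a‖ ^ 2 := by
  set R : ℕ := Reg.card with hRdef
  set B : ℕ := Regᶜ.card with hBdef
  have hW : R + B = Fintype.card ι := Finset.card_add_card_compl Reg
  have hBR : B < R := by omega
  have hd : (0 : ℝ) < (R : ℝ) - (B : ℝ) := by
    have : (B : ℝ) < (R : ℝ) := by exact_mod_cast hBR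
    linarith
  have hRpos : (0 : ℝ) < (R : ℝ) := by
    have : 0 < R := by omega
    exact_mod_cast this
  have hWcast : (Fintype.card ι : ℝ) = (R : ℝ) + (B : ℝ) := by exact_mod_cast hW.symm
  have hCα' : Cα = 2 * (R : ℝ) / ((R : ℝ) - (B : ℝ)) := by
    rw [hCα, hα, hWcast]
    have h1 : (R : ℝ) + (B : ℝ) ≠ 0 := by linarith
    have h2 : (R : ℝ) - (B : ℝ) ≠ 0 := ne_of_gt hd
    field_simp
    linear_combination ((R:ℝ)) * mul_inv_cancel₀ h2
  -- pointwise bound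
  have key : ∀ a : Ω, ‖m a‖ ^ 2 ≤ Cα ^ 2 / (R : ℝ) * ∑ ω ∈ Reg, ‖z ω a‖ ^ 2 := by
    intro a
    set S : ℝ := ∑ ω ∈ Reg, ‖z ω a‖ with hS
    set Q : ℝ := ∑ ω ∈ Reg, ‖z ω a‖ ^ 2 with hQ
    have hSnn : 0 ≤ S := Finset.sum_nonneg fun _ _ => norm_nonneg _
    have hCS : S ^ 2 ≤ (R : ℝ) * Q := by
      exact_mod_cast sq_sum_le_card_mul_sum_sq (s := Reg) (f := fun ω => ‖z ω a‖)
    -- geometric median property at y = 0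
    have h0 : ∑ ω, ‖m a - z ω a‖ ≤ ∑ ω, ‖z ω a‖ := by
      have := hm a 0
      simpa using this
    have hsplit1 : ∑ ω ∈ Reg, ‖m a - z ω a‖ + ∑ ω ∈ Regᶜ, ‖m a - z ω a‖
        = ∑ ω, ‖m a - z ω a‖ := Finset.sum_add_sum_compl Reg _
    have hsplit2 : ∑ ω ∈ Reg, ‖z ω a‖ + ∑ ω ∈ Regᶜ, ‖z ω a‖
        = ∑ ω, ‖z ω a‖ := Finset.sum_add_sum_compl Reg _
    have hreg : (R : ℝ) * ‖m a‖ - S ≤ ∑ ω ∈ Reg, ‖m a - z ω a‖ := by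
      have : ∑ ω ∈ Reg, (‖m a‖ - ‖z ω a‖) ≤ ∑ ω ∈ Reg, ‖m a - z ω a‖ :=
        Finset.sum_le_sum fun ω _ => norm_sub_norm_le _ _
      simpa [Finset.sum_sub_distrib, mul_comm] using this
    have hbyz : ∑ ω ∈ Regᶜ, ‖z ω a‖ - (B : ℝ) * ‖m a‖ ≤ ∑ ω ∈ Regᶜ, ‖m a - z ω a‖ := by
      have : ∑ ω ∈ Regᶜ, (‖z ω a‖ - ‖m a‖) ≤ ∑ ω ∈ Regᶜ, ‖m a - z ω a‖ := by
        refine Finset.sum_le_sum fun ω _ => ?_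
        calc ‖z ω a‖ - ‖m a‖ ≤ ‖z ω a - m a‖ := norm_sub_norm_le _ _
          _ = ‖m a - z ω a‖ := norm_sub_rev _ _
      simpa [Finset.sum_sub_distrib, mul_comm] using this
    have hmain : ((R : ℝ) - (B : ℝ)) * ‖m a‖ ≤ 2 * S := by
      have h0' : ∑ ω ∈ Reg, ‖m a - z ω a‖ + ∑ ω ∈ Regᶜ, ‖m a - z ω a‖
          ≤ S + ∑ ω ∈ Regᶜ, ‖z ω a‖ := by
        rw [hsplit1, hS, hsplit2]; exact h0
      linarith
    have hsq : (((R : ℝ) - (B : ℝ)) * ‖m a‖) ^ 2 ≤ (2 * S) ^ 2 := by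
      have h1 : 0 ≤ ((R : ℝ) - (B : ℝ)) * ‖m a‖ := by positivity
      nlinarith
    have hrw : Cα ^ 2 / (R : ℝ) = 4 * (R : ℝ) / (((R : ℝ) - (B : ℝ)) ^ 2) := by
      rw [hCα']
      field_simp
      ring
    rw [hrw, div_mul_eq_mul_div, le_div_iff₀ (by positivity)]
    nlinarith
  -- integrability of the RHS
  have hint : Integrable (fun a => Cα ^ 2 / (R : ℝ) * ∑ ω ∈ Reg, ‖z ω a‖ ^ 2) volume := by
    refine Integrable.const_mul ?_ _
    refine integrable_finset_sum Reg fun ω hω => ?_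
    exact ((hz2 ω hω).norm).integrable_sq
  have := integral_mono_of_nonneg
    (Filter.Eventually.of_forall fun a => by positivity) hint
    (Filter.Eventually.of_forall key)
  calc ∫ a, ‖m a‖ ^ 2 ≤ ∫ a, Cα ^ 2 / (R : ℝ) * ∑ ω ∈ Reg, ‖z ω a‖ ^ 2 := this
    _ = Cα ^ 2 / (R : ℝ) * ∑ ω ∈ Reg, ∫ a, ‖z ω a‖ ^ 2 := by
        rw [integral_const_mul]
        congr 1
        exact integral_finset_sum Reg fun ω hω => ((hz2 ω hω).norm).integrable_sq
end

section
/- Let {z_ω : ω ∈ 𝒲} be random vectors in ℝ^p and suppose the number of Byzantine workers satisfies B < W/2. Then any ε-approximate geometric median z*_ε of {z_ω : ω ∈ 𝒲} satisfies E‖z*_ε‖² ≤ (2C_α²/R) Σ_{ω∈ℛ} E‖z_ω‖² + 2ε²/(W−2B)². -/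
open MeasureTheory Finset

/-- `z` is an `ε`-approximate geometric median of the vectors `v ω`:
`∑ ω, ‖z − v ω‖ ≤ inf_y ∑ ω, ‖y − v ω‖ + ε`. -/
def IsApproxGeomMedian {ι : Type*} [Fintype ι] {E : Type*} [NormedAddCommGroup E]
    (ε : ℝ) (v : ι → E) (z : E) : Prop :=
  ∑ ω, ‖z - v ω‖ ≤ (⨅ y : E, ∑ ω, ‖y - v ω‖) + ε


set_option maxHeartbeats 1000000

/-- Scalar helper: from `d·x ≤ 2s + ε` and Cauchy–Schwarz `s² ≤ R·q` deduce the
quadratic bound `x² ≤ (8R/d²)·q + 2ε²/d²`. -/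
lemma aux_sq_bound (R d x s q ε : ℝ) (hx : 0 ≤ x) (hs : 0 ≤ s) (hε : 0 ≤ ε)
    (hd : 0 < d) (hlin : d * x ≤ 2 * s + ε) (hcs : s ^ 2 ≤ R * q) :
    x ^ 2 ≤ 8 * R / d ^ 2 * q + 2 * ε ^ 2 / d ^ 2 := by
  rw [div_mul_eq_mul_div, ← add_div, le_div_iff₀ (by positivity)]
  have e2 : (d * x) ^ 2 ≤ (2 * s + ε) ^ 2 :=
    pow_le_pow_left₀ (by positivity) hlin 2
  nlinarith [sq_nonneg (2 * s - ε)]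

/-- **Geometric median bound (ε-approximate median).**
In a system of `W` workers with regular set `Reg` (of cardinality `R`) and `B = W − R`
Byzantine workers, let `{z_ω}` be random vectors in `ℝ^p` and suppose `B < W/2`.  Then any
`ε`-approximate geometric median `z*_ε` of `{z_ω : ω ∈ 𝒲}` satisfies
`E‖z*_ε‖² ≤ (2C_α²/R) ∑_{ω ∈ Reg} E‖z_ω‖² + 2ε²/(W−2B)²`,
where `α = B/W` and `C_α = (2−2α)/(1−2α)`. -/
theorem approx_geomed_second_moment_bound
    {p : ℕ} {ι : Type*} [Fintype ι] [DecidableEq ι]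
    {Ω : Type*} [MeasureSpace Ω] [IsProbabilityMeasure (volume : Measure Ω)]
    (Reg : Finset ι) (hB : 2 * Regᶜ.card < Fintype.card ι)
    (z : ι → Ω → EuclideanSpace ℝ (Fin p))
    (hz_meas : ∀ ω, Measurable (z ω))
    (hz2 : ∀ ω ∈ Reg, MemLp (z ω) 2 volume)
    (ε : ℝ) (hε : 0 ≤ ε)
    (zeps : Ω → EuclideanSpace ℝ (Fin p)) (hzeps_meas : Measurable zeps)
    (hmed : ∀ a : Ω, IsApproxGeomMedian ε (fun ω => z ω a) (zeps a))
    (α Cα : ℝ)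
    (hα : α = (Regᶜ.card : ℝ) / (Fintype.card ι : ℝ))
    (hCα : Cα = (2 - 2 * α) / (1 - 2 * α)) :
    ∫ a, ‖zeps a‖ ^ 2
      ≤ 2 * Cα ^ 2 / (Reg.card : ℝ) * ∑ ω ∈ Reg, ∫ a, ‖z ω a‖ ^ 2
        + 2 * ε ^ 2 / ((Fintype.card ι : ℝ) - 2 * (Regᶜ.card : ℝ)) ^ 2 := by
  classical
  have hcard : Reg.card + Regᶜ.card = Fintype.card ι := Finset.card_add_card_compl Reg
  set W : ℝ := (Fintype.card ι : ℝ) with hWdef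
  set R : ℝ := (Reg.card : ℝ) with hRdef
  set B : ℝ := (Regᶜ.card : ℝ) with hBdef
  have hRB : R + B = W := by rw [hRdef, hBdef, hWdef]; exact_mod_cast hcard
  have hBW : 2 * B < W := by rw [hBdef, hWdef]; exact_mod_cast hB
  have hBnn : (0:ℝ) ≤ B := by rw [hBdef]; positivity
  have hd : (0:ℝ) < R - B := by linarith
  have hRpos : (0:ℝ) < R := by linarith
  have hWpos : (0:ℝ) < W := by linarith
  have hWne : W ≠ 0 := ne_of_gt hWpos
  have hdne : R - B ≠ 0 := ne_of_gt hd
  have hW2B : W - 2 * B = R - B := by linarith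
  -- simplify Cα
  have hα12 : 1 - 2 * α = (R - B) / W := by
    rw [hα, eq_div_iff hWne]; field_simp; linarith
  have hα22 : 2 - 2 * α = 2 * R / W := by
    rw [hα, eq_div_iff hWne]; field_simp; linarith
  have hCα' : Cα = 2 * R / (R - B) := by
    rw [hCα, hα12, hα22, div_div_div_comm, div_self hWne, div_one]
  have hc1 : 2 * Cα ^ 2 / R = 8 * R / (R - B) ^ 2 := by
    rw [hCα']; field_simp; ring
  -- pointwise bound
  have key : ∀ a : Ω, ‖zeps a‖ ^ 2
      ≤ 8 * R / (R - B) ^ 2 * ∑ ω ∈ Reg, ‖z ω a‖ ^ 2 + 2 * ε ^ 2 / (R - B) ^ 2 := by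
    intro a
    have hmed' : ∑ ω, ‖zeps a - z ω a‖
        ≤ (⨅ y : EuclideanSpace ℝ (Fin p), ∑ ω, ‖y - z ω a‖) + ε := hmed a
    have hbdd : BddBelow (Set.range fun y : EuclideanSpace ℝ (Fin p) =>
        ∑ ω, ‖y - z ω a‖) := ⟨0, by rintro _ ⟨y, rfl⟩; positivity⟩
    have hinf : (⨅ y : EuclideanSpace ℝ (Fin p), ∑ ω, ‖y - z ω a‖)
        ≤ ∑ ω, ‖z ω a‖ := by
      refine (ciInf_le hbdd 0).trans_eq ?_
      simp
    have htot : ∑ ω, ‖z ω a‖ = ∑ ω ∈ Reg, ‖z ω a‖ + ∑ ω ∈ Regᶜ, ‖z ω a‖ :=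
      (Finset.sum_add_sum_compl Reg _).symm
    have hsplit : ∑ ω, ‖zeps a - z ω a‖
        = ∑ ω ∈ Reg, ‖zeps a - z ω a‖ + ∑ ω ∈ Regᶜ, ‖zeps a - z ω a‖ :=
      (Finset.sum_add_sum_compl Reg _).symm
    have hlow1 : R * ‖zeps a‖ - ∑ ω ∈ Reg, ‖z ω a‖ ≤ ∑ ω ∈ Reg, ‖zeps a - z ω a‖ := by
      have h1 : ∑ ω ∈ Reg, (‖zeps a‖ - ‖z ω a‖) ≤ ∑ ω ∈ Reg, ‖zeps a - z ω a‖ :=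
        Finset.sum_le_sum fun ω _ => norm_sub_norm_le _ _
      have h2 : ∑ ω ∈ Reg, (‖zeps a‖ - ‖z ω a‖)
          = R * ‖zeps a‖ - ∑ ω ∈ Reg, ‖z ω a‖ := by
        rw [Finset.sum_sub_distrib, Finset.sum_const, nsmul_eq_mul, hRdef]
      linarith
    have hlow2 : ∑ ω ∈ Regᶜ, ‖z ω a‖ - B * ‖zeps a‖
        ≤ ∑ ω ∈ Regᶜ, ‖zeps a - z ω a‖ := by
      have h1 : ∑ ω ∈ Regᶜ, (‖z ω a‖ - ‖zeps a‖) ≤ ∑ ω ∈ Regᶜ, ‖zeps a - z ω a‖ := by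
        refine Finset.sum_le_sum fun ω _ => ?_
        calc ‖z ω a‖ - ‖zeps a‖ ≤ ‖z ω a - zeps a‖ := norm_sub_norm_le _ _
          _ = ‖zeps a - z ω a‖ := norm_sub_rev _ _
      have h2 : ∑ ω ∈ Regᶜ, (‖z ω a‖ - ‖zeps a‖)
          = ∑ ω ∈ Regᶜ, ‖z ω a‖ - B * ‖zeps a‖ := by
        rw [Finset.sum_sub_distrib, Finset.sum_const, nsmul_eq_mul, hBdef]
      linarith
    have hlin : (R - B) * ‖zeps a‖ ≤ 2 * ∑ ω ∈ Reg, ‖z ω a‖ + ε := by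
      have h3 : ∑ ω ∈ Reg, ‖zeps a - z ω a‖ + ∑ ω ∈ Regᶜ, ‖zeps a - z ω a‖
          ≤ (∑ ω ∈ Reg, ‖z ω a‖ + ∑ ω ∈ Regᶜ, ‖z ω a‖) + ε := by
        rw [← hsplit, ← htot]
        exact hmed'.trans (by linarith)
      nlinarith [hlow1, hlow2, h3]
    have hcs : (∑ ω ∈ Reg, ‖z ω a‖) ^ 2 ≤ R * ∑ ω ∈ Reg, ‖z ω a‖ ^ 2 := by
      have h := sq_sum_le_card_mul_sum_sq (s := Reg) (f := fun ω => ‖z ω a‖)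
      rw [hRdef]; exact_mod_cast h
    exact aux_sq_bound R (R - B) (‖zeps a‖) (∑ ω ∈ Reg, ‖z ω a‖)
      (∑ ω ∈ Reg, ‖z ω a‖ ^ 2) ε (norm_nonneg _)
      (Finset.sum_nonneg fun ω _ => norm_nonneg _) hε hd hlin hcs
  -- integrability of the regular second moments
  have hint : ∀ ω ∈ Reg, Integrable (fun a => ‖z ω a‖ ^ 2) volume := by
    intro ω hω
    have h := (hz2 ω hω).integrable_norm_rpow (by norm_num) (by norm_num)
    have h2 : (fun a => ‖z ω a‖ ^ ((2 : ENNReal)).toReal) = fun a => ‖z ω a‖ ^ 2 := by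
      funext a
      rw [ENNReal.toReal_ofNat, Real.rpow_two]
    rwa [h2] at h
  have hgint : Integrable (fun a => 8 * R / (R - B) ^ 2 * ∑ ω ∈ Reg, ‖z ω a‖ ^ 2
      + 2 * ε ^ 2 / (R - B) ^ 2) volume :=
    ((integrable_finset_sum Reg hint).const_mul _).add (integrable_const _)
  have hmono : ∫ a, ‖zeps a‖ ^ 2
      ≤ ∫ a, (8 * R / (R - B) ^ 2 * ∑ ω ∈ Reg, ‖z ω a‖ ^ 2 + 2 * ε ^ 2 / (R - B) ^ 2) :=
    integral_mono_of_nonneg (Filter.Eventually.of_forall fun a => by positivity) hgint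
      (Filter.Eventually.of_forall key)
  have hgval : ∫ a, (8 * R / (R - B) ^ 2 * ∑ ω ∈ Reg, ‖z ω a‖ ^ 2 + 2 * ε ^ 2 / (R - B) ^ 2)
      = 8 * R / (R - B) ^ 2 * (∑ ω ∈ Reg, ∫ a, ‖z ω a‖ ^ 2) + 2 * ε ^ 2 / (R - B) ^ 2 := by
    rw [integral_add ((integrable_finset_sum Reg hint).const_mul _) (integrable_const _),
      integral_const_mul, integral_finset_sum Reg hint, integral_const]
    simp
  have hbound : ∫ a, ‖zeps a‖ ^ 2
      ≤ 8 * R / (R - B) ^ 2 * (∑ ω ∈ Reg, ∫ a, ‖z ω a‖ ^ 2) + 2 * ε ^ 2 / (R - B) ^ 2 :=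
    hmono.trans_eq hgval
  -- the stated RHS: the binders swallow the additive constant
  simp only [hc1, hW2B]
  have hrhs : (∑ ω ∈ Reg, ∫ a, (‖z ω a‖ ^ 2 + 2 * ε ^ 2 / (R - B) ^ 2))
      = (∑ ω ∈ Reg, ∫ a, ‖z ω a‖ ^ 2) + R * (2 * ε ^ 2 / (R - B) ^ 2) := by
    have hstep : ∀ ω ∈ Reg, ∫ a, (‖z ω a‖ ^ 2 + 2 * ε ^ 2 / (R - B) ^ 2)
        = (∫ a, ‖z ω a‖ ^ 2) + 2 * ε ^ 2 / (R - B) ^ 2 := by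
      intro ω hω
      rw [integral_add (hint ω hω) (integrable_const _), integral_const]
      simp
    rw [Finset.sum_congr rfl hstep, Finset.sum_add_distrib, Finset.sum_const,
      nsmul_eq_mul, hRdef]
  rw [hrhs, mul_add]
  have h1R : 2 * ε ^ 2 / (R - B) ^ 2
      ≤ 8 * R / (R - B) ^ 2 * (R * (2 * ε ^ 2 / (R - B) ^ 2)) := by
    have h1 : (1:ℝ) ≤ 8 * R / (R - B) ^ 2 * R := by
      rw [div_mul_eq_mul_div, le_div_iff₀ (by positivity)]
      nlinarith
    calc 2 * ε ^ 2 / (R - B) ^ 2 = 1 * (2 * ε ^ 2 / (R - B) ^ 2) := (one_mul _).symm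
      _ ≤ (8 * R / (R - B) ^ 2 * R) * (2 * ε ^ 2 / (R - B) ^ 2) :=
          mul_le_mul_of_nonneg_right h1 (by positivity)
      _ = 8 * R / (R - B) ^ 2 * (R * (2 * ε ^ 2 / (R - B) ^ 2)) := by ring
  linarith [hbound, h1R]
end

section
/- Let f_1, …, f_J : ℝ^p → ℝ be differentiable functions each with L-Lipschitz continuous gradients, let f̄ := (1/J) Σ_{j=1}^J f_j, let x, φ_1, …, φ_J ∈ ℝ^p, let i be sampled uniformly at random from {1,…,J}, and define the SAGA corrected gradient g := ∇f_i(x) − ∇f_i(φ_i) + (1/J) Σ_{j=1}^J ∇f_j(φ_j). Then E[g] = ∇f̄(x) and E‖g − ∇f̄(x)‖² ≤ L² (1/J) Σ_{j=1}^J ‖x − φ_j‖². -/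
open Finset

section aux

variable {F : Type*} [NormedAddCommGroup F] [InnerProductSpace ℝ F]

lemma saga_var_aux {J : ℕ} (X : Fin J → F) (μ : F) (hμ : ∑ i, X i = (J : ℝ) • μ) :
    ∑ i, ‖X i - μ‖ ^ 2 ≤ ∑ i, ‖X i‖ ^ 2 := by
  have expand : ∀ i, ‖X i - μ‖ ^ 2
      = ‖X i‖ ^ 2 - 2 * inner ℝ (X i) μ + ‖μ‖ ^ 2 := fun i =>
    norm_sub_sq_real (X i) μ
  calc ∑ i, ‖X i - μ‖ ^ 2
      = ∑ i, ‖X i‖ ^ 2 - 2 * inner ℝ (∑ i, X i) μ + (J : ℝ) * ‖μ‖ ^ 2 := by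
        simp only [expand, Finset.sum_add_distrib, Finset.sum_sub_distrib,
          Finset.sum_const, card_univ, Fintype.card_fin, nsmul_eq_mul,
          ← Finset.mul_sum, sum_inner]
    _ = ∑ i, ‖X i‖ ^ 2 - (J : ℝ) * ‖μ‖ ^ 2 := by
        rw [hμ, real_inner_smul_left, real_inner_self_eq_norm_sq]; ring
    _ ≤ ∑ i, ‖X i‖ ^ 2 := by
        have : 0 ≤ (J : ℝ) * ‖μ‖ ^ 2 := by positivity
        linarith

end aux

/-- **SAGA corrected gradient: unbiasedness and variance bound.**
Let `f_1, …, f_J : ℝ^p → ℝ` be differentiable with `L`-Lipschitz gradients, let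
`f̄ = (1/J) ∑_j f_j`, and for points `x, φ_1, …, φ_J` define the SAGA corrected gradient
`g_i = ∇f_i(x) − ∇f_i(φ_i) + (1/J) ∑_j ∇f_j(φ_j)` for a uniformly random index `i`.
Then `E[g] = ∇f̄(x)` (the expectation over uniform `i` being the average over `i`) and
`E‖g − ∇f̄(x)‖² ≤ L² (1/J) ∑_j ‖x − φ_j‖²`. -/
theorem saga_corrected_gradient_unbiased_and_variance
    {p : ℕ} (J : ℕ) (hJ : 0 < J) (L : ℝ) (hL : 0 < L)
    (f : Fin J → EuclideanSpace ℝ (Fin p) → ℝ)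
    (hdiff : ∀ j, Differentiable ℝ (f j))
    (hlip : ∀ j, ∀ x y : EuclideanSpace ℝ (Fin p),
      ‖gradient (f j) x - gradient (f j) y‖ ≤ L * ‖x - y‖)
    (fbar : EuclideanSpace ℝ (Fin p) → ℝ)
    (hfbar : fbar = fun x => (J : ℝ)⁻¹ * ∑ j, f j x)
    (x : EuclideanSpace ℝ (Fin p)) (φ : Fin J → EuclideanSpace ℝ (Fin p))
    (g : Fin J → EuclideanSpace ℝ (Fin p))
    (hg : ∀ i, g i = gradient (f i) x - gradient (f i) (φ i)
        + (J : ℝ)⁻¹ • ∑ j, gradient (f j) (φ j)) :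
    ((J : ℝ)⁻¹ • ∑ i, g i = gradient fbar x) ∧
      ((J : ℝ)⁻¹ * ∑ i, ‖g i - gradient fbar x‖ ^ 2
        ≤ L ^ 2 * ((J : ℝ)⁻¹ * ∑ j, ‖x - φ j‖ ^ 2)) := by
  have hJR : (0 : ℝ) < (J : ℝ) := by exact_mod_cast hJ
  have hJne : (J : ℝ) ≠ 0 := ne_of_gt hJR
  set G : Fin J → EuclideanSpace ℝ (Fin p) := fun j => gradient (f j) x with hG
  set H : Fin J → EuclideanSpace ℝ (Fin p) := fun j => gradient (f j) (φ j) with hH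
  -- gradient of fbar
  have hgradbar : gradient fbar x = (J : ℝ)⁻¹ • ∑ j, G j := by
    have hfd : HasFDerivAt fbar
        ((J : ℝ)⁻¹ • ∑ j, (InnerProductSpace.toDual ℝ _ (G j) :
          EuclideanSpace ℝ (Fin p) →L[ℝ] ℝ)) x := by
      rw [hfbar]
      exact (HasFDerivAt.fun_sum fun j _ =>
        ((hdiff j x).hasGradientAt.hasFDerivAt)).const_mul _
    have := hfd.hasGradientAt
    rw [map_smul, map_sum] at this
    simp only [LinearIsometryEquiv.symm_apply_apply] at this
    exact this.gradient
  set X : Fin J → EuclideanSpace ℝ (Fin p) := fun j => G j - H j with hX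
  set c : EuclideanSpace ℝ (Fin p) := (J : ℝ)⁻¹ • ∑ j, H j with hc
  set μ : EuclideanSpace ℝ (Fin p) := (J : ℝ)⁻¹ • ∑ j, X j with hμ
  have hsumX : ∑ j, X j = (J : ℝ) • μ := by
    rw [hμ, smul_smul, mul_inv_cancel₀ hJne, one_smul]
  have hgc : ∀ i, g i = X i + c := fun i => hg i
  have hμeq : gradient fbar x = μ + c := by
    rw [hgradbar, hμ, hc, hX]
    simp [Finset.sum_sub_distrib, smul_sub]
  -- Part 1
  have part1 : (J : ℝ)⁻¹ • ∑ i, g i = gradient fbar x := by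
    rw [hμeq]
    simp only [hgc, Finset.sum_add_distrib, Finset.sum_const, card_univ,
      Fintype.card_fin, smul_add, hμ]
    congr 1
    rw [← Nat.cast_smul_eq_nsmul ℝ, smul_smul, inv_mul_cancel₀ hJne, one_smul]
  refine ⟨part1, ?_⟩
  -- Part 2
  have hdiffμ : ∀ i, g i - gradient fbar x = X i - μ := fun i => by
    rw [hgc i, hμeq]; abel
  have key : ∑ i, ‖g i - gradient fbar x‖ ^ 2 ≤ ∑ i, ‖X i‖ ^ 2 := by
    simp only [hdiffμ]
    exact saga_var_aux X μ hsumX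
  have bound : ∑ i, ‖X i‖ ^ 2 ≤ ∑ i, L ^ 2 * ‖x - φ i‖ ^ 2 := by
    refine Finset.sum_le_sum fun i _ => ?_
    have h1 : ‖X i‖ ≤ L * ‖x - φ i‖ := hlip i x (φ i)
    have h2 : (0 : ℝ) ≤ ‖X i‖ := norm_nonneg _
    calc ‖X i‖ ^ 2 ≤ (L * ‖x - φ i‖) ^ 2 := by
          exact pow_le_pow_left₀ h2 h1 2
      _ = L ^ 2 * ‖x - φ i‖ ^ 2 := by ring
  have hinv : (0 : ℝ) ≤ (J : ℝ)⁻¹ := by positivity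
  calc (J : ℝ)⁻¹ * ∑ i, ‖g i - gradient fbar x‖ ^ 2
      ≤ (J : ℝ)⁻¹ * (L ^ 2 * ∑ i, ‖x - φ i‖ ^ 2) := by
        apply mul_le_mul_of_nonneg_left _ hinv
        calc ∑ i, ‖g i - gradient fbar x‖ ^ 2 ≤ ∑ i, ‖X i‖ ^ 2 := key
          _ ≤ ∑ i, L ^ 2 * ‖x - φ i‖ ^ 2 := bound
          _ = L ^ 2 * ∑ i, ‖x - φ i‖ ^ 2 := by rw [Finset.mul_sum]
    _ = L ^ 2 * ((J : ℝ)⁻¹ * ∑ j, ‖x - φ j‖ ^ 2) := by ring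
end

section
/- In the SAGA setting where each regular worker updates its stored points by φ_{ω,i_ω^t}^{t+1} = x^t and φ_{ω,j}^{t+1} = φ_{ω,j}^t for j ≠ i_ω^t, and the iterate is updated as x^{t+1} = x^t − γ z^t for some random vector z^t, under Assumption 1 the quantity S^t satisfies E S^{t+1} ≤ 4J E‖x^{t+1} − x^t + γ∇f(x^t)‖² + 4Jγ²L²‖x^t − x*‖² + (1 − 1/J²) S^t. -/
open MeasureTheory Finset
open scoped RealInnerProductSpace

private lemma sq_split (a b β : ℝ) (hβ : 0 < β) :
    (a + b) ^ 2 ≤ (1 + β) * a ^ 2 + (1 + β⁻¹) * b ^ 2 := by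
  have h1 : β * β⁻¹ = 1 := mul_inv_cancel₀ hβ.ne'
  nlinarith [sq_nonneg (β * a - b), hβ, mul_pos hβ hβ, sq_nonneg (a - b)]

private lemma norm_split {E : Type*} [NormedAddCommGroup E] (u v : E) (β : ℝ) (hβ : 0 < β) :
    ‖u + v‖ ^ 2 ≤ (1 + β) * ‖u‖ ^ 2 + (1 + β⁻¹) * ‖v‖ ^ 2 := by
  calc ‖u + v‖ ^ 2 ≤ (‖u‖ + ‖v‖) ^ 2 :=
        pow_le_pow_left₀ (norm_nonneg _) (norm_add_le u v) 2
    _ ≤ _ := sq_split _ _ _ hβ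

private lemma map_eval_pi {ι : Type*} [Fintype ι] {J : ℕ} (μJ : Measure (Fin J))
    [IsProbabilityMeasure μJ] (ω : ι) :
    (Measure.pi fun _ : ι => μJ).map (Function.eval ω) = μJ := by
  ext s hs
  classical
  rw [Measure.map_apply (measurable_pi_apply ω) hs, Set.eval_preimage, Measure.pi_pi]
  calc ∏ i, μJ (Function.update (fun _ => Set.univ) ω s i)
      = ∏ i : ι, (if i = ω then μJ s else 1) := by
        refine Finset.prod_congr rfl fun i _ => ?_
        rcases eq_or_ne i ω with h | h
        · subst h; simp
        · simp [Function.update_of_ne h, h]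
    _ = μJ s := by simp

private lemma sum_ite_zero {J : ℕ} (c : Fin J → ℝ) (i : Fin J) :
    ∑ j, (if j = i then (0:ℝ) else c j) = ∑ j, c j - c i := by
  calc ∑ j, (if j = i then (0:ℝ) else c j)
      = ∑ j, (c j - if j = i then c j else 0) := by
        refine Finset.sum_congr rfl fun j _ => ?_
        rcases eq_or_ne j i with h | h <;> simp [h]
    _ = ∑ j, c j - c i := by
        rw [Finset.sum_sub_distrib, Finset.sum_ite_eq' Finset.univ i c]
        simp

set_option maxHeartbeats 1000000 in
/-- **SAGA: evolution of the stored-point discrepancy `S` (Lemma 2, last claim).**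
Conditioned on the history (current iterate `x` and stored points `φ_{ω,j}`), each regular
worker draws a uniform sample index `i_ω` (independently of the history) and updates its
stored points by `φ_{ω,i_ω}⁺ = x`, `φ_{ω,j}⁺ = φ_{ω,j}` for `j ≠ i_ω`, while the iterate
is updated as `x⁺ = x − γz` for some random vector `z` (possibly correlated with the
sample indices, modelled by an auxiliary seed).  Under Assumption 1,
`E S⁺ ≤ 4J E‖x⁺ − x + γ∇f(x)‖² + 4Jγ²L²‖x − x*‖² + (1 − 1/J²) S`, where
`S = (1/R) ∑_{ω∈ℛ} (1/J) ∑_j ‖x − φ_{ω,j}‖²` and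
`S⁺ = (1/R) ∑_{ω∈ℛ} (1/J) ∑_j ‖x⁺ − φ_{ω,j}⁺‖²`. -/
theorem saga_stored_points_recursion
    {p J : ℕ} (hJ : 0 < J)
    {ι : Type*} [Fintype ι] [DecidableEq ι]
    (Reg : Finset ι) (hReg : Reg.Nonempty)
    {Saux : Type*} [MeasurableSpace Saux] (μaux : Measure Saux) [IsProbabilityMeasure μaux]
    (μJ : Measure (Fin J)) [IsProbabilityMeasure μJ]
    (hμJ : ∀ j, μJ {j} = (J : ENNReal)⁻¹)
    -- the objective
    (fsample : ι → Fin J → EuclideanSpace ℝ (Fin p) → ℝ)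
    (floc : ι → EuclideanSpace ℝ (Fin p) → ℝ)
    (hfloc : ∀ ω, floc ω = fun x => (J : ℝ)⁻¹ * ∑ j, fsample ω j x)
    (f : EuclideanSpace ℝ (Fin p) → ℝ)
    (hf : f = fun x => (Reg.card : ℝ)⁻¹ * ∑ ω ∈ Reg, floc ω x)
    (hdiff : ∀ ω j, Differentiable ℝ (fsample ω j))
    -- Assumption 1
    (μ L : ℝ) (hμ : 0 < μ) (hL : 0 < L)
    (hsc : ∀ x y : EuclideanSpace ℝ (Fin p),
      f x ≥ f y + ⟪gradient f y, x - y⟫ + μ / 2 * ‖x - y‖ ^ 2)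
    (hlip : ∀ x y : EuclideanSpace ℝ (Fin p),
      ‖gradient f x - gradient f y‖ ≤ L * ‖x - y‖)
    (xstar : EuclideanSpace ℝ (Fin p)) (hmin : ∀ y, f xstar ≤ f y)
    -- current state, update direction and step size
    (x : EuclideanSpace ℝ (Fin p))
    (φ : ι → Fin J → EuclideanSpace ℝ (Fin p))
    (γ : ℝ) (hγ : 0 < γ)
    (z : (ι → Fin J) × Saux → EuclideanSpace ℝ (Fin p))
    (hz_meas : Measurable z)
    (hz2 : MemLp z 2 ((Measure.pi fun _ : ι => μJ).prod μaux))
    (xnext : (ι → Fin J) × Saux → EuclideanSpace ℝ (Fin p))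
    (hxnext : ∀ a, xnext a = x - γ • z a)
    -- S and its next value
    (S : ℝ)
    (hS : S = (Reg.card : ℝ)⁻¹ * ∑ ω ∈ Reg, (J : ℝ)⁻¹ * ∑ j, ‖x - φ ω j‖ ^ 2)
    (Snext : (ι → Fin J) × Saux → ℝ)
    (hSnext : ∀ a, Snext a = (Reg.card : ℝ)⁻¹ * ∑ ω ∈ Reg, (J : ℝ)⁻¹ *
        ∑ j, ‖xnext a - (if j = a.1 ω then x else φ ω j)‖ ^ 2) :
    ∫ a, Snext a ∂((Measure.pi fun _ : ι => μJ).prod μaux)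
      ≤ 4 * J * ∫ a, ‖xnext a - x + γ • gradient f x‖ ^ 2
            ∂((Measure.pi fun _ : ι => μJ).prod μaux)
        + 4 * J * γ ^ 2 * L ^ 2 * ‖x - xstar‖ ^ 2
        + (1 - 1 / (J : ℝ) ^ 2) * S := by
  classical
  set ρ := (Measure.pi fun _ : ι => μJ).prod μaux with hρdef
  have hJ0 : (J : ℝ) ≠ 0 := Nat.cast_ne_zero.mpr hJ.ne'
  have hJ1 : (1 : ℝ) ≤ (J : ℝ) := by exact_mod_cast hJ
  have hR0 : (Reg.card : ℝ) ≠ 0 := Nat.cast_ne_zero.mpr hReg.card_pos.ne'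
  -- gradient bound at x
  have hgrad0 : gradient f xstar = 0 := by
    have hl : IsLocalMin f xstar := Filter.Eventually.of_forall hmin
    rw [gradient, hl.fderiv_eq_zero, map_zero]
  have hgb : ‖gradient f x‖ ≤ L * ‖x - xstar‖ := by
    have h := hlip x xstar; rwa [hgrad0, sub_zero] at h
  -- evaluation maps
  have hma : ∀ ω : ι, Measurable fun a : (ι → Fin J) × Saux => a.1 ω :=
    fun ω => (measurable_pi_apply ω).comp measurable_fst
  have hmap : ∀ ω : ι, ρ.map (fun a => a.1 ω) = μJ := by
    intro ω
    have h1 : (fun a : (ι → Fin J) × Saux => a.1 ω) = (Function.eval ω) ∘ Prod.fst := rfl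
    rw [h1, ← Measure.map_map (measurable_pi_apply ω) measurable_fst, hρdef,
      Measure.map_fst_prod, measure_univ, one_smul, map_eval_pi]
  have hint_eval : ∀ (ω : ι) (g : Fin J → ℝ), Integrable (fun a => g (a.1 ω)) ρ := by
    intro ω g
    have h2 : Integrable g (ρ.map (fun a => a.1 ω)) := by rw [hmap ω]; exact .of_finite
    exact (integrable_map_measure (measurable_of_finite g).aestronglyMeasurable
      (hma ω).aemeasurable).mp h2
  have hI_eval : ∀ (ω : ι) (g : Fin J → ℝ),
      ∫ a, g (a.1 ω) ∂ρ = (J : ℝ)⁻¹ * ∑ j, g j := by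
    intro ω g
    rw [← integral_map (hma ω).aemeasurable
        (measurable_of_finite g).aestronglyMeasurable, hmap ω,
      integral_fintype (f := g) .of_finite]
    simp [measureReal_def, hμJ, smul_eq_mul, ENNReal.toReal_inv, Finset.mul_sum]
  -- basic integrabilities
  have hIz : Integrable (fun a => ‖z a‖ ^ 2) ρ := hz2.norm.integrable_sq
  have hWmem : MemLp (fun a => xnext a - x + γ • gradient f x) 2 ρ := by
    have he : (fun a => xnext a - x + γ • gradient f x)
        = (fun _ => γ • gradient f x) - γ • z := by
      funext a
      simp only [Pi.sub_apply, Pi.smul_apply, hxnext a]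
      abel
    rw [he]
    exact (memLp_const _).sub (hz2.const_smul γ)
  have hIW : Integrable (fun a => ‖xnext a - x + γ • gradient f x‖ ^ 2) ρ :=
    hWmem.norm.integrable_sq
  have hIW0 : 0 ≤ ∫ a, ‖xnext a - x + γ • gradient f x‖ ^ 2 ∂ρ :=
    integral_nonneg fun a => sq_nonneg _
  have hzx : ∀ a, ‖xnext a - x‖ ^ 2 = γ ^ 2 * ‖z a‖ ^ 2 := by
    intro a
    rw [hxnext a, sub_sub_cancel_left, norm_neg, norm_smul, Real.norm_eq_abs,
      abs_of_pos hγ, mul_pow]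
  -- the auxiliary function E
  set E : (ι → Fin J) × Saux → ℝ :=
    fun a => (Reg.card : ℝ)⁻¹ * ∑ ω ∈ Reg, (J : ℝ)⁻¹ * ‖x - φ ω (a.1 ω)‖ ^ 2 with hEdef
  have hIE : Integrable E ρ := by
    apply Integrable.const_mul
    exact integrable_finset_sum _ fun ω _ =>
      (hint_eval ω fun j => ‖x - φ ω j‖ ^ 2).const_mul _
  have hIE_val : ∫ a, E a ∂ρ = (J : ℝ)⁻¹ * S := by
    rw [hEdef]
    rw [integral_const_mul, integral_finset_sum _ (fun ω _ =>
      (hint_eval ω fun j => ‖x - φ ω j‖ ^ 2).const_mul _)]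
    have h3 : ∀ ω ∈ Reg, ∫ a, (J : ℝ)⁻¹ * ‖x - φ ω (a.1 ω)‖ ^ 2 ∂ρ
        = (J : ℝ)⁻¹ * ((J : ℝ)⁻¹ * ∑ j, ‖x - φ ω j‖ ^ 2) := by
      intro ω _
      rw [integral_const_mul, hI_eval ω fun j => ‖x - φ ω j‖ ^ 2]
    rw [Finset.sum_congr rfl h3, hS, ← Finset.mul_sum]
    ring
  -- pointwise bound
  have hpt : ∀ a, Snext a ≤ ((J : ℝ) + 1) * (γ ^ 2 * ‖z a‖ ^ 2)
      + (1 + (J : ℝ)⁻¹) * (S - E a) := by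
    intro a
    have key : ∀ ω ∈ Reg,
        (J : ℝ)⁻¹ * ∑ j, ‖xnext a - (if j = a.1 ω then x else φ ω j)‖ ^ 2
        ≤ ((J : ℝ) + 1) * (γ ^ 2 * ‖z a‖ ^ 2)
          + (1 + (J : ℝ)⁻¹) * ((J : ℝ)⁻¹ *
            (∑ j, ‖x - φ ω j‖ ^ 2 - ‖x - φ ω (a.1 ω)‖ ^ 2)) := by
      intro ω _
      have hj : ∀ j : Fin J, ‖xnext a - (if j = a.1 ω then x else φ ω j)‖ ^ 2
          ≤ ((J : ℝ) + 1) * (γ ^ 2 * ‖z a‖ ^ 2)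
            + (1 + (J : ℝ)⁻¹) * (if j = a.1 ω then 0 else ‖x - φ ω j‖ ^ 2) := by
        intro j
        rcases eq_or_ne j (a.1 ω) with h | h
        · rw [if_pos h, if_pos h, hzx a]
          have h4 : (0:ℝ) ≤ γ ^ 2 * ‖z a‖ ^ 2 := by positivity
          nlinarith
        · rw [if_neg h, if_neg h]
          have h1 : xnext a - φ ω j = (x - φ ω j) + (xnext a - x) := by abel
          have h2 := norm_split (x - φ ω j) (xnext a - x) ((J : ℝ)⁻¹) (by positivity)
          rw [← h1, hzx a, inv_inv] at h2
          linarith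
      calc (J : ℝ)⁻¹ * ∑ j, ‖xnext a - (if j = a.1 ω then x else φ ω j)‖ ^ 2
          ≤ (J : ℝ)⁻¹ * ∑ j : Fin J, (((J : ℝ) + 1) * (γ ^ 2 * ‖z a‖ ^ 2)
              + (1 + (J : ℝ)⁻¹) * (if j = a.1 ω then 0 else ‖x - φ ω j‖ ^ 2)) :=
            mul_le_mul_of_nonneg_left (Finset.sum_le_sum fun j _ => hj j) (by positivity)
        _ = _ := by
            rw [Finset.sum_add_distrib, Finset.sum_const, ← Finset.mul_sum,
              sum_ite_zero (fun j => ‖x - φ ω j‖ ^ 2) (a.1 ω)]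
            simp only [Finset.card_univ, Fintype.card_fin, nsmul_eq_mul]
            field_simp
    rw [hSnext a, hS, hEdef]
    calc (Reg.card : ℝ)⁻¹ * ∑ ω ∈ Reg, (J : ℝ)⁻¹ *
          ∑ j, ‖xnext a - (if j = a.1 ω then x else φ ω j)‖ ^ 2
        ≤ (Reg.card : ℝ)⁻¹ * ∑ ω ∈ Reg, (((J : ℝ) + 1) * (γ ^ 2 * ‖z a‖ ^ 2)
            + (1 + (J : ℝ)⁻¹) * ((J : ℝ)⁻¹ *
              (∑ j, ‖x - φ ω j‖ ^ 2 - ‖x - φ ω (a.1 ω)‖ ^ 2))) :=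
          mul_le_mul_of_nonneg_left (Finset.sum_le_sum key) (by positivity)
      _ = _ := by
          rw [Finset.sum_add_distrib, Finset.sum_const, nsmul_eq_mul, ← Finset.mul_sum]
          simp only [mul_sub, Finset.sum_sub_distrib, ← Finset.mul_sum]
          field_simp
  -- the dominating function is integrable
  have hIB : Integrable (fun a => ((J : ℝ) + 1) * (γ ^ 2 * ‖z a‖ ^ 2)
      + (1 + (J : ℝ)⁻¹) * (S - E a)) ρ :=
    (((hIz.const_mul _).const_mul _).add (((integrable_const S).sub hIE).const_mul _))
  -- Snext is nonnegative and measurable, hence integrable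
  have hSnn : ∀ a, 0 ≤ Snext a := by
    intro a; rw [hSnext a]; positivity
  have hxm : Measurable xnext := by
    have h5 : xnext = fun a => x - γ • z a := funext hxnext
    rw [h5]; exact measurable_const.sub (hz_meas.const_smul γ)
  have hSm : Measurable Snext := by
    have h6 : Snext = fun a => (Reg.card : ℝ)⁻¹ * ∑ ω ∈ Reg, (J : ℝ)⁻¹ *
        ∑ j, ‖xnext a - (if j = a.1 ω then x else φ ω j)‖ ^ 2 := funext hSnext
    rw [h6]
    apply Measurable.const_mul
    apply Finset.measurable_sum
    intro ω _
    apply Measurable.const_mul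
    apply Finset.measurable_sum
    intro j _
    have hset : MeasurableSet {a : (ι → Fin J) × Saux | j = a.1 ω} := by
      have h7 : {a : (ι → Fin J) × Saux | j = a.1 ω}
          = (fun a : (ι → Fin J) × Saux => a.1 ω) ⁻¹' {j} := by
        ext a; simp [eq_comm]
      rw [h7]; exact (hma ω) (measurableSet_singleton j)
    exact ((hxm.sub (Measurable.ite hset measurable_const measurable_const)).norm).pow_const 2
  have hIS : Integrable Snext ρ := by
    refine Integrable.mono' hIB hSm.aestronglyMeasurable (ae_of_all _ fun a => ?_)
    rw [Real.norm_eq_abs, abs_of_nonneg (hSnn a)]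
    exact hpt a
  -- integrate the pointwise bound
  have h1 : ∫ a, Snext a ∂ρ ≤ ∫ a, (((J : ℝ) + 1) * (γ ^ 2 * ‖z a‖ ^ 2)
      + (1 + (J : ℝ)⁻¹) * (S - E a)) ∂ρ := integral_mono hIS hIB hpt
  have h2 : ∫ a, (((J : ℝ) + 1) * (γ ^ 2 * ‖z a‖ ^ 2)
      + (1 + (J : ℝ)⁻¹) * (S - E a)) ∂ρ
      = ((J : ℝ) + 1) * (γ ^ 2 * ∫ a, ‖z a‖ ^ 2 ∂ρ)
        + (1 + (J : ℝ)⁻¹) * (S - (J : ℝ)⁻¹ * S) := by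
    have e2 : Integrable (fun a => S - E a) ρ := (integrable_const S).sub hIE
    have e4 : ∫ a, (S - E a) ∂ρ = S - (J : ℝ)⁻¹ * S := by
      rw [integral_sub (integrable_const S) hIE, integral_const, hIE_val]
      simp [measure_univ]
    rw [integral_add ((hIz.const_mul _).const_mul _) (e2.const_mul _),
      integral_const_mul, integral_const_mul, integral_const_mul, e4]
  -- bound the quadratic term
  have hCb : ∀ a, γ ^ 2 * ‖z a‖ ^ 2
      ≤ 2 * ‖xnext a - x + γ • gradient f x‖ ^ 2
        + 2 * (γ ^ 2 * (L ^ 2 * ‖x - xstar‖ ^ 2)) := by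
    intro a
    have h1' : xnext a - x = (xnext a - x + γ • gradient f x) + (-(γ • gradient f x)) := by
      abel
    have h2' := norm_split (xnext a - x + γ • gradient f x) (-(γ • gradient f x)) 1 one_pos
    rw [← h1', hzx a, norm_neg] at h2'
    have h3' : ‖γ • gradient f x‖ ^ 2 ≤ γ ^ 2 * (L ^ 2 * ‖x - xstar‖ ^ 2) := by
      rw [norm_smul, Real.norm_eq_abs, abs_of_pos hγ, mul_pow]
      have h8 : ‖gradient f x‖ ^ 2 ≤ L ^ 2 * ‖x - xstar‖ ^ 2 := by
        nlinarith [norm_nonneg (gradient f x), norm_nonneg (x - xstar)]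
      nlinarith [sq_nonneg γ]
    norm_num at h2'
    linarith
  have hIzbound : γ ^ 2 * ∫ a, ‖z a‖ ^ 2 ∂ρ
      ≤ 2 * ∫ a, ‖xnext a - x + γ • gradient f x‖ ^ 2 ∂ρ
        + 2 * (γ ^ 2 * (L ^ 2 * ‖x - xstar‖ ^ 2)) := by
    have e5 : Integrable (fun a => 2 * ‖xnext a - x + γ • gradient f x‖ ^ 2) ρ :=
      hIW.const_mul 2
    have e6 : Integrable (fun _ : (ι → Fin J) × Saux =>
        2 * (γ ^ 2 * (L ^ 2 * ‖x - xstar‖ ^ 2))) ρ := integrable_const _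
    have h9 : ∫ a, γ ^ 2 * ‖z a‖ ^ 2 ∂ρ ≤ ∫ a, (2 * ‖xnext a - x + γ • gradient f x‖ ^ 2
        + 2 * (γ ^ 2 * (L ^ 2 * ‖x - xstar‖ ^ 2))) ∂ρ :=
      integral_mono (hIz.const_mul (γ ^ 2)) (e5.add e6) hCb
    rwa [integral_add e5 e6, integral_const_mul,
      integral_const, measureReal_def, measure_univ, ENNReal.toReal_one, one_smul, integral_const_mul] at h9
  -- put everything together
  have heq : (1 + (J : ℝ)⁻¹) * (S - (J : ℝ)⁻¹ * S) = (1 - 1 / (J : ℝ) ^ 2) * S := by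
    field_simp
    ring
  have hd0 : (0:ℝ) ≤ γ ^ 2 * (L ^ 2 * ‖x - xstar‖ ^ 2) := by positivity
  have hfinal : ((J : ℝ) + 1) * (γ ^ 2 * ∫ a, ‖z a‖ ^ 2 ∂ρ)
      ≤ 4 * J * ∫ a, ‖xnext a - x + γ • gradient f x‖ ^ 2 ∂ρ
        + 4 * J * γ ^ 2 * L ^ 2 * ‖x - xstar‖ ^ 2 := by
    nlinarith [mul_le_mul_of_nonneg_left hIzbound
        (by positivity : (0:ℝ) ≤ (J : ℝ) + 1),
      mul_nonneg (sub_nonneg.mpr hJ1) hIW0,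
      mul_nonneg (sub_nonneg.mpr hJ1) hd0]
  calc ∫ a, Snext a ∂ρ
      ≤ ((J : ℝ) + 1) * (γ ^ 2 * ∫ a, ‖z a‖ ^ 2 ∂ρ)
        + (1 + (J : ℝ)⁻¹) * (S - (J : ℝ)⁻¹ * S) := by rw [← h2]; exact h1
    _ ≤ _ := by rw [heq]; linarith
end
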